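/- arXiv:1510.09187 — 2 statements merged into one kernel-verified Lean document; each statement's English description precedes it below -/
import Mathlib

section
/- Let X ~ Bin(n, p) with 0 < p < 1. Then P[X ≤ n/(log n)^2] ≤ e^{3 n log log n / (log n)^2} · (1−p)^{n − n/(log n)^2}, for n sufficiently large. -/
open Real Finset


lemma aux_pow_div_fact_mono (n : ℕ) : ∀ m, m ≤ n → ∀ i, i ≤ m →
    (n:ℝ)^i / i.factorial ≤ (n:ℝ)^m / m.factorial := by
  intro m
  induction m with
  | zero => intro _ i hi; interval_cases i; simp
  | succ m ih =>
    intro hm i hi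
    rcases Nat.lt_succ_iff_lt_or_eq.mp (Nat.lt_succ_of_le hi) with h | h
    · refine le_trans (ih (by omega) i (by omega)) ?_
      rw [div_le_div_iff₀ (by positivity) (by positivity)]
      rw [pow_succ, Nat.factorial_succ]
      push_cast
      have h1 : (0:ℝ) ≤ (n:ℝ)^m := by positivity
      have h2 : (m:ℝ) + 1 ≤ n := by exact_mod_cast hm
      have h3 : (0:ℝ) < m.factorial := by positivity
      nlinarith [mul_nonneg h1 h3.le]
    · subst h
      exact le_refl _

lemma aux_pow_self_le (m : ℕ) : (m:ℝ)^m ≤ Real.exp m * m.factorial := by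
  have h := Real.sum_le_exp_of_nonneg (x := (m:ℝ)) (Nat.cast_nonneg m) (m+1)
  have h2 : (m:ℝ)^m / m.factorial ≤ ∑ i ∈ range (m+1), (m:ℝ)^i / i.factorial :=
    Finset.single_le_sum (f := fun i => (m:ℝ)^i / i.factorial)
      (fun i _ => by positivity) (self_mem_range_succ m)
  have hf : (0:ℝ) < m.factorial := by positivity
  calc (m:ℝ)^m = (m:ℝ)^m / m.factorial * m.factorial := by field_simp
    _ ≤ Real.exp m * m.factorial := mul_le_mul_of_nonneg_right (h2.trans h) hf.le

set_option maxHeartbeats 1000000 in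
/-- For X ~ Bin(n,p) with 0 < p < 1 and n large,
P[X ≤ n/(log n)²] ≤ e^{3 n log log n/(log n)²} · (1−p)^{n − n/(log n)²}. -/
theorem stmt_6 (p : ℝ) (hp0 : 0 < p) (hp1 : p < 1) :
    ∃ N : ℕ, ∀ n : ℕ, N ≤ n →
      ∑ i ∈ Finset.range (n + 1),
          (if (i : ℝ) ≤ (n : ℝ) / (Real.log n) ^ 2 then
            (n.choose i : ℝ) * p ^ i * (1 - p) ^ (n - i) else 0)
        ≤ Real.exp (3 * n * Real.log (Real.log n) / (Real.log n) ^ 2) *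
            (1 - p) ^ ((n : ℝ) - (n : ℝ) / (Real.log n) ^ 2) := by

  classical
  refine ⟨max 1024 (⌈Real.exp (Real.exp 3)⌉₊ + 1), fun n hn => ?_⟩
  have hn1024 : (1024:ℝ) ≤ n := by
    have : 1024 ≤ n := le_trans (le_max_left _ _) hn
    exact_mod_cast this
  have hnpos : (0:ℝ) < n := by linarith
  have hne : Real.exp (Real.exp 3) ≤ n := by
    have h1 : Real.exp (Real.exp 3) ≤ (⌈Real.exp (Real.exp 3)⌉₊ : ℝ) := Nat.le_ceil _
    have h2 : (⌈Real.exp (Real.exp 3)⌉₊ : ℝ) ≤ n := by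
      have : ⌈Real.exp (Real.exp 3)⌉₊ ≤ n := le_trans (by omega) (le_trans (le_max_right 1024 _) hn)
      exact_mod_cast this
    linarith
  set L : ℝ := Real.log n with hLdef
  have hL3 : Real.exp 3 ≤ L := by
    have := Real.log_le_log (Real.exp_pos _) hne
    rwa [Real.log_exp] at this
  have hL4 : (4:ℝ) ≤ L := le_trans (by nlinarith [Real.add_one_le_exp (3:ℝ)]) hL3
  have hLL : (3:ℝ) ≤ Real.log L := by
    have := Real.log_le_log (Real.exp_pos 3) hL3
    rwa [Real.log_exp] at this
  have hLpos : (0:ℝ) < L := by linarith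
  -- 2 L^2 ≤ n
  have hsq : Real.sqrt n * Real.sqrt n = n := Real.mul_self_sqrt hnpos.le
  have hs32 : (32:ℝ) ≤ Real.sqrt n := by
    have : Real.sqrt 1024 ≤ Real.sqrt n := Real.sqrt_le_sqrt hn1024
    rwa [show (1024:ℝ) = 32^2 by norm_num, Real.sqrt_sq (by norm_num)] at this
  have hlogr : L ≤ 4 * (n:ℝ) ^ ((1:ℝ)/4) := by
    have := Real.log_le_rpow_div (Nat.cast_nonneg n) (by norm_num : (0:ℝ) < 1/4)
    calc L ≤ (n:ℝ) ^ ((1:ℝ)/4) / (1/4) := this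
      _ = 4 * (n:ℝ) ^ ((1:ℝ)/4) := by ring
  have hq : ((n:ℝ) ^ ((1:ℝ)/4))^2 = Real.sqrt n := by
    rw [Real.sqrt_eq_rpow, ← Real.rpow_natCast ((n:ℝ) ^ ((1:ℝ)/4)) 2,
      ← Real.rpow_mul (Nat.cast_nonneg n)]
    norm_num
  have hL2n : 2 * L^2 ≤ n := by
    have h1 : L^2 ≤ (4 * (n:ℝ) ^ ((1:ℝ)/4))^2 := by
      apply pow_le_pow_left₀ (by linarith) hlogr
    have h2 : (4 * (n:ℝ) ^ ((1:ℝ)/4))^2 = 16 * Real.sqrt n := by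
      rw [mul_pow, hq]; norm_num
    nlinarith [Real.sqrt_nonneg (n:ℝ)]
  set k : ℝ := (n:ℝ) / L^2 with hkdef
  have hL2pos : (0:ℝ) < L^2 := by positivity
  have hk2 : (2:ℝ) ≤ k := by
    rw [hkdef, le_div_iff₀ hL2pos]; linarith
  have hkn : k ≤ n := by
    rw [hkdef]
    apply div_le_self hnpos.le
    nlinarith
  set m : ℕ := ⌊k⌋₊ with hmdef
  have hm2 : 2 ≤ m := Nat.le_floor (by exact_mod_cast hk2)
  have hmk : (m:ℝ) ≤ k := Nat.floor_le (by linarith)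
  have hkm : k < m + 1 := Nat.lt_floor_add_one k
  have hmn : m ≤ n := by
    have : (m:ℝ) ≤ n := le_trans hmk hkn
    exact_mod_cast this
  have hmpos : (0:ℝ) < m := by
    have : (2:ℝ) ≤ m := by exact_mod_cast hm2
    linarith
  have hk2m : k ≤ 2 * m := by
    have : (1:ℝ) ≤ m := by linarith
    linarith
  have h1p0 : (0:ℝ) < 1 - p := by linarith
  have h1p1 : (1:ℝ) - p ≤ 1 := by linarith
  set B : ℝ := (n:ℝ)^m / m.factorial * (1 - p) ^ ((n:ℝ) - k) with hBdef
  have hBnn : 0 ≤ B := by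
    apply mul_nonneg (by positivity)
    exact Real.rpow_nonneg h1p0.le _
  -- termwise bound
  have hterm : ∀ i ∈ range (n+1),
      (if (i : ℝ) ≤ k then (n.choose i : ℝ) * p ^ i * (1 - p) ^ (n - i) else 0)
        ≤ (if (i : ℝ) ≤ k then B else 0) := by
    intro i hi
    rw [Finset.mem_range] at hi
    have hin : i ≤ n := by omega
    split_ifs with hik
    · have him : i ≤ m := Nat.le_floor hik
      have c1 : (n.choose i : ℝ) ≤ (n:ℝ)^i / i.factorial := by
        have := Nat.choose_le_pow_div (α := ℝ) i n
        simpa using this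
      have c2 : p ^ i ≤ 1 := pow_le_one₀ hp0.le hp1.le
      have c3 : ((1:ℝ) - p) ^ (n - i) ≤ (1 - p) ^ ((n:ℝ) - k) := by
        rw [← Real.rpow_natCast (1-p) (n-i)]
        apply Real.rpow_le_rpow_of_exponent_ge h1p0 h1p1
        rw [Nat.cast_sub hin]
        linarith
      have c4 : (n:ℝ)^i / i.factorial ≤ (n:ℝ)^m / m.factorial :=
        aux_pow_div_fact_mono n m hmn i him
      have hch : (0:ℝ) ≤ (n.choose i : ℝ) := Nat.cast_nonneg _
      have hpw : (0:ℝ) ≤ ((1:ℝ) - p) ^ (n - i) := by positivity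
      calc (n.choose i : ℝ) * p ^ i * (1 - p) ^ (n - i)
          ≤ (n.choose i : ℝ) * 1 * (1 - p) ^ (n - i) := by
            apply mul_le_mul_of_nonneg_right _ hpw
            exact mul_le_mul_of_nonneg_left c2 hch
        _ = (n.choose i : ℝ) * (1 - p) ^ (n - i) := by ring
        _ ≤ ((n:ℝ)^m / m.factorial) * (1 - p) ^ ((n:ℝ) - k) := by
            apply mul_le_mul (c1.trans c4) c3 hpw (by positivity)
        _ = B := rfl
    · exact le_refl 0
  -- count
  have hcard : ((range (n+1)).filter (fun i : ℕ => (i:ℝ) ≤ k)).card ≤ m + 1 := by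
    have hsub : (range (n+1)).filter (fun i : ℕ => (i:ℝ) ≤ k) ⊆ range (m+1) := by
      intro i hi
      rw [Finset.mem_filter] at hi
      rw [Finset.mem_range]
      have := Nat.le_floor hi.2
      omega
    calc _ ≤ (range (m+1)).card := Finset.card_le_card hsub
      _ = m + 1 := Finset.card_range _
  -- key exponent bound
  have key : ((m:ℝ) + 1) * ((n:ℝ)^m / m.factorial) ≤ Real.exp (3 * n * Real.log L / L^2) := by
    have hnm : (n:ℝ) ≤ 2 * m * L^2 := by
      have : (n:ℝ) / L^2 ≤ 2 * m := hk2m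
      rw [div_le_iff₀ hL2pos] at this
      linarith
    have e1 : (n:ℝ)^m / m.factorial ≤ (Real.exp 1 * ((n:ℝ)/m))^m := by
      have hr : (Real.exp 1 * ((n:ℝ)/m))^m = Real.exp m * (n:ℝ)^m / (m:ℝ)^m := by
        rw [mul_pow, div_pow, Real.exp_one_pow]
        ring
      rw [hr, div_le_div_iff₀ (by positivity) (by positivity)]
      have := aux_pow_self_le m
      nlinarith [pow_nonneg (Nat.cast_nonneg n : (0:ℝ) ≤ n) m,
        mul_nonneg (pow_nonneg (Nat.cast_nonneg n : (0:ℝ) ≤ n) m) (Real.exp_pos (m:ℝ)).le]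
    have e2 : Real.exp 1 * ((n:ℝ)/m) ≤ 2 * Real.exp 1 * L^2 := by
      have h1 : (n:ℝ)/m ≤ 2 * L^2 := by
        rw [div_le_iff₀ hmpos]; nlinarith
      calc Real.exp 1 * ((n:ℝ)/m) ≤ Real.exp 1 * (2 * L^2) :=
            mul_le_mul_of_nonneg_left h1 (Real.exp_pos 1).le
        _ = 2 * Real.exp 1 * L^2 := by ring
    have hposbase : (0:ℝ) < 2 * Real.exp 1 * L^2 := by positivity
    have e3 : (Real.exp 1 * ((n:ℝ)/m))^m ≤ (2 * Real.exp 1 * L^2)^m :=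
      pow_le_pow_left₀ (by positivity) e2 m
    have e4 : (2 * Real.exp 1 * L^2)^m = Real.exp (m * Real.log (2 * Real.exp 1 * L^2)) := by
      rw [← Real.log_pow, Real.exp_log (by positivity)]
    have e5 : (m:ℝ) + 1 ≤ Real.exp k := by
      have := Real.add_one_le_exp k
      linarith
    have elog : Real.log (2 * Real.exp 1 * L^2) = Real.log 2 + 1 + 2 * Real.log L := by
      rw [Real.log_mul (by positivity) (by positivity),
        Real.log_mul (by norm_num) (Real.exp_ne_zero 1), Real.log_exp, Real.log_pow]
      push_cast; ring
    have hlog2 : Real.log 2 ≤ 1 := by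
      have := Real.log_two_lt_d9
      linarith
    have e7 : k + (m:ℝ) * Real.log (2 * Real.exp 1 * L^2) ≤ 3 * k * Real.log L := by
      rw [elog]
      have hlognn : (0:ℝ) ≤ Real.log 2 + 1 + 2 * Real.log L := by
        nlinarith [Real.log_nonneg (by norm_num : (1:ℝ) ≤ 2)]
      have hm_le : (m:ℝ) * (Real.log 2 + 1 + 2 * Real.log L) ≤ k * (Real.log 2 + 1 + 2 * Real.log L) :=
        mul_le_mul_of_nonneg_right hmk hlognn
      nlinarith
    have e8 : 3 * k * Real.log L = 3 * n * Real.log L / L^2 := by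
      rw [hkdef]; field_simp
    calc ((m:ℝ) + 1) * ((n:ℝ)^m / m.factorial)
        ≤ Real.exp k * (Real.exp 1 * ((n:ℝ)/m))^m := by
          apply mul_le_mul e5 e1 (by positivity) (Real.exp_pos k).le
      _ ≤ Real.exp k * Real.exp (m * Real.log (2 * Real.exp 1 * L^2)) := by
          rw [← e4]
          exact mul_le_mul_of_nonneg_left e3 (Real.exp_pos k).le
      _ = Real.exp (k + m * Real.log (2 * Real.exp 1 * L^2)) := (Real.exp_add _ _).symm
      _ ≤ Real.exp (3 * k * Real.log L) := Real.exp_le_exp.mpr e7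
      _ = Real.exp (3 * n * Real.log L / L^2) := by rw [e8]
  -- combine
  calc ∑ i ∈ range (n + 1),
        (if (i : ℝ) ≤ (n : ℝ) / L ^ 2 then
          (n.choose i : ℝ) * p ^ i * (1 - p) ^ (n - i) else 0)
      ≤ ∑ i ∈ range (n + 1), (if (i : ℝ) ≤ k then B else 0) := Finset.sum_le_sum hterm
    _ = ((range (n+1)).filter (fun i : ℕ => (i:ℝ) ≤ k)).card * B := by
        rw [Finset.sum_ite, Finset.sum_const, Finset.sum_const_zero, add_zero, nsmul_eq_mul]
    _ ≤ ((m:ℝ) + 1) * B := by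
        apply mul_le_mul_of_nonneg_right _ hBnn
        exact_mod_cast hcard
    _ = (((m:ℝ) + 1) * ((n:ℝ)^m / m.factorial)) * (1 - p) ^ ((n:ℝ) - k) := by
        rw [hBdef]; ring
    _ ≤ Real.exp (3 * n * Real.log L / L^2) * (1 - p) ^ ((n:ℝ) - k) :=
        mul_le_mul_of_nonneg_right key (Real.rpow_nonneg h1p0.le _)
end

section
/- Let s ≥ 3, let A be a set of a vertices such that every subset of A of size a/(log a)² contains a clique of size s−2 in a fixed graph G_A[A], let B be disjoint from A with G_A[B] empty, and let each A–B edge be present independently with probability p. Then for any collection E of vertex pairs from B, the expected number of pairs in E not completed by G_A (i.e., pairs {u,v} such that adding uv creates no K_s) is at most (1−p²)^{a − a/log a} · |E|, for n sufficiently large. -/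
open MeasureTheory
open scoped ENNReal Classical

/-- The random graph on A ⊕ B where A = Fin a carries the fixed graph G_A, B is
empty, and the A–B edges are given by ω. -/
def bipRandomGraph (a : ℕ) (B : Type*) (GA : SimpleGraph (Fin a))
    (ω : Fin a → B → Bool) : SimpleGraph (Fin a ⊕ B) where
  Adj x y := match x, y with
    | .inl i, .inl j => GA.Adj i j
    | .inl i, .inr b => ω i b = true
    | .inr b, .inl i => ω i b = true
    | .inr _, .inr _ => False
  symm := by
    constructor
    intro x y h
    cases x <;> cases y <;> simp_all <;> exact h.symm
  loopless := by
    constructor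
    intro x
    cases x <;> simp

section auxiliary
open Filter


lemma pow_self_le_three_pow_mul_factorial : ∀ j : ℕ, (j:ℝ)^j ≤ 3^j * j.factorial := by
  intro j
  induction j with
  | zero => simp
  | succ n ih =>
    rcases Nat.eq_zero_or_pos n with h | h
    · subst h; norm_num
    have hn : (0:ℝ) < n := by exact_mod_cast h
    have h1 : ((n:ℝ)+1)^n ≤ 3 * n^n := by
      have : ((n:ℝ)+1)/n ≤ Real.exp (1/n) := by
        rw [div_le_iff₀ hn] at *
        have := Real.add_one_le_exp (1/(n:ℝ))
        calc ((n:ℝ)+1) = (1/n + 1) * n := by field_simp; ring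
          _ ≤ Real.exp (1/n) * n := by nlinarith [Real.add_one_le_exp (1/(n:ℝ))]
      have h2 : (((n:ℝ)+1)/n)^n ≤ Real.exp (1/n) ^ n := by
        apply pow_le_pow_left₀ (by positivity) this
      rw [← Real.exp_nat_mul] at h2
      have h3 : Real.exp ((n:ℝ) * (1/n)) = Real.exp 1 := by
        congr 1; field_simp
      have h4 : (((n:ℝ)+1)/n)^n = ((n:ℝ)+1)^n / n^n := by
        rw [div_pow]
      have h5 : ((n:ℝ)+1)^n / n^n ≤ 3 := by
        calc ((n:ℝ)+1)^n / n^n ≤ Real.exp 1 := by rw [← h4]; rw [h3] at h2; exact h2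
          _ ≤ 3 := by linarith [Real.exp_one_lt_d9.le]
      calc ((n:ℝ)+1)^n = (((n:ℝ)+1)^n / n^n) * n^n := by field_simp
        _ ≤ 3 * n^n := by nlinarith [pow_pos hn n]
    have hfac : ((n+1:ℕ).factorial : ℝ) = (n+1) * n.factorial := by
      push_cast [Nat.factorial_succ]; ring
    calc ((n+1:ℕ):ℝ)^(n+1) = ((n:ℝ)+1) * ((n:ℝ)+1)^n := by push_cast; ring
      _ ≤ ((n:ℝ)+1) * (3 * n^n) := by
          apply mul_le_mul_of_nonneg_left h1 (by positivity)
      _ ≤ ((n:ℝ)+1) * (3 * (3^n * n.factorial)) := by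
          have : (0:ℝ) < (n:ℝ)+1 := by positivity
          nlinarith [ih, this]
      _ = 3^(n+1) * ((n+1:ℕ).factorial : ℝ) := by rw [hfac]; push_cast; ring

set_option maxHeartbeats 1000000 in


lemma key_bound (p : ℝ) (hp0 : 0 < p) (hp1 : p < 1) :
    ∀ᶠ a : ℕ in atTop, ∀ j : ℕ, j ≤ a → (j:ℝ) < (a:ℝ) / (Real.log a)^2 →
      (a.choose j : ℝ) * (p^2)^j * (1-p^2)^(a-j) * ((a:ℝ)+1)
        ≤ (1 - p^2) ^ ((a:ℝ) - (a:ℝ) / Real.log a) := by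
  set Q : ℝ := 1 - p^2 with hQdef
  have hQ0 : 0 < Q := by nlinarith
  have hQ1 : Q < 1 := by nlinarith
  set c : ℝ := -Real.log Q with hcdef
  have hc : 0 < c := by
    have := Real.log_neg hQ0 hQ1
    simp [hcdef]; linarith
  -- eventual conditions
  have ev1 : ∀ᶠ x : ℝ in atTop, 4 ≤ Real.log x := (Real.tendsto_log_atTop).eventually_ge_atTop 4
  have ev2 : ∀ᶠ x : ℝ in atTop, 3 + 2 * Real.log x ≤ (c/4) * x := by
    have h1 : Tendsto (fun x : ℝ => (3 + 2 * Real.log x) / x) atTop (nhds 0) := by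
      have hl := Real.tendsto_pow_log_div_mul_add_atTop 1 0 1 one_ne_zero
      have h0 : Tendsto (fun x : ℝ => 3 / x) atTop (nhds 0) := tendsto_const_nhds.div_atTop tendsto_id
      have := h0.add ((hl.const_mul 2))
      simp only [add_zero, mul_zero] at this
      convert this using 2 with x
      ring
    have := h1.eventually (eventually_lt_nhds (show (0:ℝ) < c/4 by positivity))
    filter_upwards [this, eventually_gt_atTop (0:ℝ)] with x hx hx0
    have := (div_le_iff₀ hx0).mp hx.le
    linarith [this]
  have ev2' : ∀ᶠ x : ℝ in atTop, 3 + 2 * Real.log (Real.log x) ≤ (c/4) * Real.log x :=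
    Real.tendsto_log_atTop.eventually ev2
  have ev3 : ∀ᶠ x : ℝ in atTop, (Real.log x + 1) * Real.log x ≤ (c/4) * x := by
    have h1 : Tendsto (fun x : ℝ => ((Real.log x + 1) * Real.log x) / x) atTop (nhds 0) := by
      have h2 := Real.tendsto_pow_log_div_mul_add_atTop 1 0 2 one_ne_zero
      have h3 := Real.tendsto_pow_log_div_mul_add_atTop 1 0 1 one_ne_zero
      have := h2.add h3
      simp only [add_zero] at this
      convert this using 2 with x
      simp only [one_mul, add_zero]
      ring
    have := h1.eventually (eventually_lt_nhds (show (0:ℝ) < c/4 by positivity))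
    filter_upwards [this, eventually_gt_atTop (0:ℝ)] with x hx hx0
    have := (div_le_iff₀ hx0).mp hx.le
    linarith
  have evlog : ∀ᶠ x : ℝ in atTop, Real.log (x+1) ≤ Real.log x + 1 := by
    filter_upwards [eventually_ge_atTop (1:ℝ)] with x hx
    have h1 : x + 1 ≤ 2 * x := by linarith
    have : Real.log (x+1) ≤ Real.log (2*x) := Real.log_le_log (by linarith) h1
    rw [Real.log_mul (by norm_num) (by linarith)] at this
    have h2 : Real.log 2 ≤ 1 := by
      have := Real.log_le_sub_one_of_pos (show (0:ℝ) < 2 by norm_num)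
      linarith
    linarith
  have hcast := tendsto_natCast_atTop_atTop (R := ℝ)
  filter_upwards [hcast.eventually ev1, hcast.eventually ev2', hcast.eventually ev3,
    hcast.eventually evlog, eventually_ge_atTop 1] with a hL4 hE3 hE4 hlog ha1
  intro j hja hjm
  have ha0 : (0:ℝ) < a := by exact_mod_cast ha1
  set L : ℝ := Real.log a with hLdef
  have hL1 : (1:ℝ) ≤ L := by linarith
  have hL0 : (0:ℝ) < L := by linarith
  set m : ℝ := (a:ℝ) / L^2 with hmdef
  have hm0 : 0 < m := by positivity
  have hma : m ≤ (a:ℝ) := by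
    rw [hmdef, div_le_iff₀ (by positivity)]
    nlinarith [mul_le_mul_of_nonneg_left (show (1:ℝ) ≤ L^2 by nlinarith) ha0.le]
  -- bound on choose * P^j : ≤ exp (m * (log (3*L^2) + 1))
  have hlog3L : 0 ≤ Real.log (3 * L^2) := by
    apply Real.log_nonneg; nlinarith
  have hchoose : (a.choose j : ℝ) * (p^2)^j ≤ Real.exp (m * (Real.log (3*L^2) + 1)) := by
    have hP1 : (p^2)^j ≤ 1 := by
      apply pow_le_one₀ (by positivity); nlinarith
    have hcnn : (0:ℝ) ≤ (a.choose j : ℝ) := by positivity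
    have step : (a.choose j : ℝ) ≤ Real.exp (m * (Real.log (3*L^2) + 1)) := by
      rcases Nat.eq_zero_or_pos j with hj0 | hj0
      · subst hj0
        simp only [Nat.choose_zero_right, Nat.cast_one]
        rw [Real.one_le_exp_iff]
        positivity
      · have hj0' : (0:ℝ) < j := by exact_mod_cast hj0
        -- choose ≤ (3a/j)^j
        have h1 : (a.choose j : ℝ) ≤ (a:ℝ)^j / j.factorial := Nat.choose_le_pow_div j a
        have h2 : (a:ℝ)^j / j.factorial ≤ (3*(a:ℝ)/j)^j := by
          have hf := pow_self_le_three_pow_mul_factorial j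
          have hfpos : (0:ℝ) < j.factorial := by exact_mod_cast j.factorial_pos
          rw [div_le_iff₀ hfpos, div_pow, div_mul_eq_mul_div, le_div_iff₀ (by positivity)]
          calc (a:ℝ)^j * (j:ℝ)^j ≤ (a:ℝ)^j * (3^j * j.factorial) := by
                apply mul_le_mul_of_nonneg_left hf (by positivity)
            _ = (3*(a:ℝ))^j * j.factorial := by rw [mul_pow]; ring
        -- (3a/j)^j = exp (j * log(3a/j)) ≤ exp (m * log(3L^2) + m)
        have h3 : (3*(a:ℝ)/j)^j = Real.exp ((j:ℝ) * Real.log (3*(a:ℝ)/j)) := by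
          rw [← Real.log_pow, Real.exp_log (by positivity)]
        have h4 : (j:ℝ) * Real.log (3*(a:ℝ)/j) ≤ m * Real.log (3*L^2) + m := by
          have hsplit : (3*(a:ℝ)/j) = (3*L^2) * (m/j) := by
            rw [hmdef]; field_simp
          rw [hsplit, Real.log_mul (by positivity) (by positivity)]
          have hA : (j:ℝ) * Real.log (3*L^2) ≤ m * Real.log (3*L^2) := by
            apply mul_le_mul_of_nonneg_right hjm.le hlog3L
          have hB : (j:ℝ) * Real.log (m/j) ≤ m := by
            have := Real.log_le_sub_one_of_pos (show (0:ℝ) < m/j by positivity)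
            calc (j:ℝ) * Real.log (m/j) ≤ (j:ℝ) * (m/j - 1) := by
                  apply mul_le_mul_of_nonneg_left this (by positivity)
              _ = m - j := by field_simp
              _ ≤ m := by linarith
          calc (j:ℝ) * (Real.log (3*L^2) + Real.log (m/j))
              = (j:ℝ) * Real.log (3*L^2) + (j:ℝ) * Real.log (m/j) := by ring
            _ ≤ m * Real.log (3*L^2) + m := by linarith
        calc (a.choose j : ℝ) ≤ (a:ℝ)^j / j.factorial := h1
          _ ≤ (3*(a:ℝ)/j)^j := h2
          _ = Real.exp ((j:ℝ) * Real.log (3*(a:ℝ)/j)) := h3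
          _ ≤ Real.exp (m * Real.log (3*L^2) + m) := Real.exp_le_exp.mpr h4
          _ = Real.exp (m * (Real.log (3*L^2) + 1)) := by ring_nf
    calc (a.choose j : ℝ) * (p^2)^j ≤ (a.choose j : ℝ) * 1 := by
          apply mul_le_mul_of_nonneg_left hP1 hcnn
      _ = (a.choose j : ℝ) := by ring
      _ ≤ _ := step
  -- Q^(a-j) ≤ Q^((a:ℝ) - m)  (rpow)
  have hQpow : Q^(a-j) ≤ Q ^ ((a:ℝ) - m) := by
    have hcast2 : (Q:ℝ)^(a-j) = Q ^ (((a-j : ℕ)):ℝ) := by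
      rw [Real.rpow_natCast]
    rw [hcast2]
    apply Real.rpow_le_rpow_of_exponent_ge hQ0 hQ1.le
    rw [Nat.cast_sub hja]
    linarith
  -- main exponential inequality
  have hmain : ((a:ℝ)+1) * Real.exp (m * (Real.log (3*L^2) + 1)) ≤ Q ^ (m - (a:ℝ)/L) := by
    have hrpow : Q ^ (m - (a:ℝ)/L) = Real.exp (((a:ℝ)/L - m) * c) := by
      rw [Real.rpow_def_of_pos hQ0, hcdef]
      congr 1; ring
    rw [hrpow]
    have hA1 : ((a:ℝ)+1) = Real.exp (Real.log ((a:ℝ)+1)) := by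
      rw [Real.exp_log (by positivity)]
    rw [hA1, ← Real.exp_add, Real.exp_le_exp]
    -- log(a+1) + m*(log(3L²)+1) ≤ (a/L - m)*c
    have e1 : Real.log ((a:ℝ)+1) ≤ (c/4) * ((a:ℝ)/L) := by
      have heq : (c/4) * ((a:ℝ)/L) = ((c/4)*(a:ℝ))/L := by ring
      rw [heq, le_div_iff₀ hL0]
      nlinarith [mul_le_mul_of_nonneg_right hlog hL0.le, hE4]
    have e2 : m * (Real.log (3*L^2) + 1) ≤ (c/4) * ((a:ℝ)/L) := by
      have hlog3 : Real.log (3*L^2) = Real.log 3 + 2 * Real.log L := by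
        rw [Real.log_mul (by norm_num) (by positivity), Real.log_pow]
        push_cast; ring
      have hlog3' : Real.log 3 ≤ 2 := by
        have := Real.log_le_sub_one_of_pos (show (0:ℝ) < 3 by norm_num)
        linarith
      have h1 : Real.log (3*L^2) + 1 ≤ 3 + 2 * Real.log L := by
        rw [hlog3]; linarith
      have h2 : 3 + 2 * Real.log L ≤ (c/4) * L := hE3
      calc m * (Real.log (3*L^2) + 1) ≤ m * ((c/4) * L) := by
            apply mul_le_mul_of_nonneg_left (le_trans h1 h2) hm0.le
        _ = (c/4) * ((a:ℝ)/L) := by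
            rw [hmdef]; field_simp
    have e3 : c * ((a:ℝ)/L^2) ≤ (c/4) * ((a:ℝ)/L) := by
      have heq : (c/4) * ((a:ℝ)/L) - c * ((a:ℝ)/L^2) = (c*(a:ℝ)*(L-4))/(4*L^2) := by
        field_simp
      nlinarith [div_nonneg (mul_nonneg (mul_nonneg hc.le ha0.le) (by linarith : (0:ℝ) ≤ L - 4)) (by positivity : (0:ℝ) ≤ 4*L^2), heq]
    have hALm : ((a:ℝ)/L - m) * c = c * ((a:ℝ)/L) - c * ((a:ℝ)/L^2) := by
      rw [hmdef]; ring
    rw [hALm]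
    have hfin : (c/4) * ((a:ℝ)/L) + (c/4) * ((a:ℝ)/L) + (c/4) * ((a:ℝ)/L) ≤ c * ((a:ℝ)/L) := by
      have : (0:ℝ) ≤ (a:ℝ)/L := by positivity
      nlinarith
    linarith
  -- combine
  have hsplit : Q ^ ((a:ℝ) - (a:ℝ)/L) = Q ^ ((a:ℝ) - m) * Q ^ (m - (a:ℝ)/L) := by
    rw [← Real.rpow_add hQ0]; congr 1; ring
  have hQr0 : (0:ℝ) ≤ Q ^ ((a:ℝ) - m) := (Real.rpow_pos_of_pos hQ0 _).le
  calc (a.choose j : ℝ) * (p^2)^j * Q^(a-j) * ((a:ℝ)+1)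
      ≤ Real.exp (m * (Real.log (3*L^2) + 1)) * (Q ^ ((a:ℝ) - m)) * ((a:ℝ)+1) := by
        apply mul_le_mul_of_nonneg_right _ (by positivity)
        apply mul_le_mul hchoose hQpow (by positivity) (Real.exp_pos _).le
    _ = Q ^ ((a:ℝ) - m) * (((a:ℝ)+1) * Real.exp (m * (Real.log (3*L^2) + 1))) := by ring
    _ ≤ Q ^ ((a:ℝ) - m) * Q ^ (m - (a:ℝ)/L) := by
        apply mul_le_mul_of_nonneg_left hmain hQr0
    _ = Q ^ ((a:ℝ) - (a:ℝ)/L) := hsplit.symm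


section
variable {a : ℕ} {B : Type} [Fintype B] [DecidableEq B] {p : ℝ}


lemma muB_pair (hp0 : 0 < p) (hp1 : p < 1) (u v : B) (huv : u ≠ v) :
    (Measure.pi fun _ : B => (PMF.bernoulli (Real.toNNReal p)
        (Real.toNNReal_le_one.mpr hp1.le)).toMeasure)
      {f : B → Bool | f u = true ∧ f v = true} = ENNReal.ofReal (p^2) := by
  set bern := (PMF.bernoulli (Real.toNNReal p) (Real.toNNReal_le_one.mpr hp1.le)).toMeasure
  have hset : {f : B → Bool | f u = true ∧ f v = true}
      = Set.pi Set.univ (fun b => if b = u ∨ b = v then ({true} : Set Bool) else Set.univ) := by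
    ext f
    simp only [Set.mem_setOf_eq, Set.mem_pi, Set.mem_univ, forall_true_left]
    constructor
    · rintro ⟨h1, h2⟩ b
      by_cases hb : b = u ∨ b = v
      · rcases hb with rfl | rfl <;> simp [h1, h2]
      · simp [hb]
    · intro h
      constructor
      · have := h u; simp at this; exact this
      · have := h v; simp at this; exact this
  rw [hset, Measure.pi_pi]
  have hbt : bern {true} = ENNReal.ofReal p := by
    rw [PMF.toMeasure_apply_singleton _ _ (measurableSet_singleton _)]
    simp [PMF.bernoulli_apply, ENNReal.ofReal]
  have hbu : bern Set.univ = 1 := measure_univ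
  calc (∏ b : B, bern (if b = u ∨ b = v then ({true} : Set Bool) else Set.univ))
      = ∏ b : B, (if b = u ∨ b = v then ENNReal.ofReal p else 1) := by
        apply Finset.prod_congr rfl
        intro b _
        by_cases hb : b = u ∨ b = v
        · simp only [if_pos hb]; exact hbt
        · simp only [if_neg hb]; exact hbu
    _ = ENNReal.ofReal p ^ (Finset.univ.filter fun b => b = u ∨ b = v).card := by
        rw [Finset.prod_ite, Finset.prod_const, Finset.prod_const, one_pow, mul_one]
    _ = ENNReal.ofReal (p^2) := by
        have : (Finset.univ.filter fun b => b = u ∨ b = v) = {u, v} := by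
          ext b; simp [Finset.mem_insert]
        rw [this, Finset.card_insert_of_notMem (by simp [huv]), Finset.card_singleton,
          ← ENNReal.ofReal_pow hp0.le]

end

section
variable {a : ℕ} {B : Type} [Fintype B] [DecidableEq B] {p : ℝ}

lemma cyl_measure (hp0 : 0 < p) (hp1 : p < 1) (u v : B) (huv : u ≠ v) (K : Finset (Fin a)) :
    (Measure.pi fun _ : Fin a => Measure.pi fun _ : B =>
        (PMF.bernoulli (Real.toNNReal p) (Real.toNNReal_le_one.mpr hp1.le)).toMeasure)
      {ω : Fin a → B → Bool | ∀ i, ((ω i u = true ∧ ω i v = true) ↔ i ∈ K)}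
    = ENNReal.ofReal (p^2) ^ K.card * ENNReal.ofReal (1-p^2) ^ (a - K.card) := by
  set μB := (Measure.pi fun _ : B =>
    (PMF.bernoulli (Real.toNNReal p) (Real.toNNReal_le_one.mpr hp1.le)).toMeasure) with hμB
  set Su : Set (B → Bool) := {f | f u = true ∧ f v = true} with hSu
  have hq2 : μB Su = ENNReal.ofReal (p^2) := muB_pair hp0 hp1 u v huv
  have hq2c : μB Suᶜ = ENNReal.ofReal (1-p^2) := by
    have : IsProbabilityMeasure μB := by infer_instance
    rw [measure_compl MeasurableSet.of_discrete (measure_ne_top _ _), measure_univ, hq2]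
    rw [← ENNReal.ofReal_one, ← ENNReal.ofReal_sub _ (by positivity)]
  have hset : {ω : Fin a → B → Bool | ∀ i, ((ω i u = true ∧ ω i v = true) ↔ i ∈ K)}
      = Set.pi Set.univ (fun i => if i ∈ K then Su else Suᶜ) := by
    ext ω
    simp only [Set.mem_setOf_eq, Set.mem_pi, Set.mem_univ, forall_true_left]
    constructor
    · intro h i
      by_cases hi : i ∈ K
      · simp only [if_pos hi]; exact (h i).mpr hi
      · simp only [if_neg hi]
        intro hc
        exact hi ((h i).mp hc)
    · intro h i
      by_cases hi : i ∈ K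
      · have := h i; rw [if_pos hi] at this; exact ⟨fun _ => hi, fun _ => this⟩
      · have := h i; rw [if_neg hi] at this
        exact ⟨fun hc => absurd hc this, fun hc => absurd hc hi⟩
  rw [hset, Measure.pi_pi]
  calc (∏ i : Fin a, μB (if i ∈ K then Su else Suᶜ))
      = ∏ i : Fin a, (if i ∈ K then ENNReal.ofReal (p^2) else ENNReal.ofReal (1-p^2)) := by
        apply Finset.prod_congr rfl
        intro i _
        by_cases hi : i ∈ K
        · simp only [if_pos hi]; exact hq2
        · simp only [if_neg hi]; exact hq2c
    _ = ENNReal.ofReal (p^2) ^ K.card * ENNReal.ofReal (1-p^2) ^ (a - K.card) := by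
        rw [Finset.prod_ite, Finset.prod_const, Finset.prod_const]
        congr 2
        · simp
        · rw [Finset.filter_not]
          have hfil : Finset.univ.filter (fun i => i ∈ K) = K := by simp
          rw [hfil, Finset.card_sdiff_of_subset (Finset.subset_univ K)]
          simp

lemma pair_prob_le (hp0 : 0 < p) (hp1 : p < 1) (u v : B) (huv : u ≠ v) :
    (Measure.pi fun _ : Fin a => Measure.pi fun _ : B =>
        (PMF.bernoulli (Real.toNNReal p) (Real.toNNReal_le_one.mpr hp1.le)).toMeasure)
      {ω : Fin a → B → Bool |
        ((Finset.univ.filter fun i : Fin a => ω i u = true ∧ ω i v = true).card : ℝ)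
          < (a:ℝ) / (Real.log a)^2}
    ≤ ∑ j ∈ Finset.range (a+1), a.choose j •
        (if (j:ℝ) < (a:ℝ) / (Real.log a)^2 then
          ENNReal.ofReal (p^2) ^ j * ENNReal.ofReal (1-p^2) ^ (a - j) else 0) := by
  set μ := (Measure.pi fun _ : Fin a => Measure.pi fun _ : B =>
    (PMF.bernoulli (Real.toNNReal p) (Real.toNNReal_le_one.mpr hp1.le)).toMeasure)
  set m : ℝ := (a:ℝ) / (Real.log a)^2 with hm
  have hsub : {ω : Fin a → B → Bool |
        ((Finset.univ.filter fun i : Fin a => ω i u = true ∧ ω i v = true).card : ℝ) < m}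
      ⊆ ⋃ K ∈ (Finset.univ : Finset (Fin a)).powerset.filter (fun K => (K.card:ℝ) < m),
          {ω : Fin a → B → Bool | ∀ i, ((ω i u = true ∧ ω i v = true) ↔ i ∈ K)} := by
    intro ω hω
    simp only [Set.mem_setOf_eq] at hω
    apply Set.mem_biUnion (s := _)
    · show (Finset.univ.filter fun i : Fin a => ω i u = true ∧ ω i v = true)
        ∈ (Finset.univ : Finset (Fin a)).powerset.filter (fun K => (K.card:ℝ) < m)
      simp only [Finset.mem_filter, Finset.mem_powerset]
      exact ⟨Finset.subset_univ _, hω⟩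
    · simp only [Set.mem_setOf_eq]
      intro i
      simp [Finset.mem_filter]
  calc μ _ ≤ μ (⋃ K ∈ (Finset.univ : Finset (Fin a)).powerset.filter (fun K => (K.card:ℝ) < m),
          {ω : Fin a → B → Bool | ∀ i, ((ω i u = true ∧ ω i v = true) ↔ i ∈ K)}) :=
        measure_mono hsub
    _ ≤ ∑ K ∈ (Finset.univ : Finset (Fin a)).powerset.filter (fun K => (K.card:ℝ) < m),
          μ {ω : Fin a → B → Bool | ∀ i, ((ω i u = true ∧ ω i v = true) ↔ i ∈ K)} :=
        measure_biUnion_finset_le _ _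
    _ = ∑ K ∈ (Finset.univ : Finset (Fin a)).powerset.filter (fun K => (K.card:ℝ) < m),
          ENNReal.ofReal (p^2) ^ K.card * ENNReal.ofReal (1-p^2) ^ (a - K.card) := by
        apply Finset.sum_congr rfl
        intro K _
        exact cyl_measure hp0 hp1 u v huv K
    _ = ∑ K ∈ (Finset.univ : Finset (Fin a)).powerset,
          (if ((K.card:ℝ) < m) then
            ENNReal.ofReal (p^2) ^ K.card * ENNReal.ofReal (1-p^2) ^ (a - K.card) else 0) :=
        (Finset.sum_filter _ _)
    _ = ∑ j ∈ Finset.range ((Finset.univ : Finset (Fin a)).card + 1),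
          (Finset.univ : Finset (Fin a)).card.choose j •
          (if ((j:ℝ) < m) then
            ENNReal.ofReal (p^2) ^ j * ENNReal.ofReal (1-p^2) ^ (a - j) else 0) :=
        Finset.sum_powerset_apply_card
          (fun k => if ((k:ℝ) < m) then
            ENNReal.ofReal (p^2) ^ k * ENNReal.ofReal (1-p^2) ^ (a - k) else 0)
    _ = _ := by
        simp only [Finset.card_univ, Fintype.card_fin]

end

end auxiliary

lemma completes {a s : ℕ} (hs : 3 ≤ s) {B : Type} [Fintype B] [DecidableEq B]
    (GA : SimpleGraph (Fin a))
    (hGA : ∀ S : Finset (Fin a), (a : ℝ) / (Real.log a) ^ 2 ≤ S.card →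
      ∃ t : Finset (Fin a), t ⊆ S ∧ GA.IsNClique (s - 2) t)
    (ω : Fin a → B → Bool) (u v : B) (huv : u ≠ v)
    (h : (a:ℝ) / (Real.log a)^2 ≤
      ((Finset.univ.filter fun i : Fin a => ω i u = true ∧ ω i v = true).card : ℝ)) :
    ∃ T : Finset (Fin a ⊕ B),
      ((bipRandomGraph a B GA ω) ⊔
        SimpleGraph.fromEdgeSet {s(Sum.inr u, Sum.inr v)}).IsNClique s T
      ∧ Sum.inr u ∈ T ∧ Sum.inr v ∈ T := by
  set S := Finset.univ.filter fun i : Fin a => ω i u = true ∧ ω i v = true with hS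
  obtain ⟨t, htS, htcl⟩ := hGA S h
  set G := (bipRandomGraph a B GA ω) ⊔
    SimpleGraph.fromEdgeSet {s(Sum.inr u, Sum.inr v)} with hG
  have hmemS : ∀ i ∈ t, ω i u = true ∧ ω i v = true := by
    intro i hi
    have := htS hi
    rw [hS, Finset.mem_filter] at this
    exact this.2
  refine ⟨t.image Sum.inl ∪ {Sum.inr u, Sum.inr v}, ⟨?_, ?_⟩, ?_, ?_⟩
  · -- IsClique
    intro x hx y hy hxy
    simp only [Finset.coe_union, Set.mem_union, Finset.coe_image, Set.mem_image,
      Finset.mem_coe, Finset.coe_insert, Set.mem_insert_iff, Finset.coe_singleton,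
      Set.mem_singleton_iff] at hx hy
    have adj_edge : G.Adj (Sum.inr u) (Sum.inr v) := by
      rw [hG]
      apply Or.inr
      constructor
      · exact Set.mem_singleton _
      · simp [huv]
    have adj_lu : ∀ i ∈ t, G.Adj (Sum.inl i) (Sum.inr u) := by
      intro i hi
      apply Or.inl
      show ω i u = true
      exact (hmemS i hi).1
    have adj_lv : ∀ i ∈ t, G.Adj (Sum.inl i) (Sum.inr v) := by
      intro i hi
      apply Or.inl
      show ω i v = true
      exact (hmemS i hi).2
    rcases hx with ⟨i, hi, rfl⟩ | rfl | rfl <;> rcases hy with ⟨j, hj, rfl⟩ | rfl | rfl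
    · apply Or.inl
      show GA.Adj i j
      exact htcl.1 hi hj (fun hij => hxy (by rw [hij]))
    · exact adj_lu i hi
    · exact adj_lv i hi
    · exact (adj_lu j hj).symm
    · exact absurd rfl hxy
    · exact adj_edge
    · exact (adj_lv j hj).symm
    · exact adj_edge.symm
    · exact absurd rfl hxy
  · -- card
    rw [Finset.card_union_of_disjoint, Finset.card_image_of_injective _ Sum.inl_injective,
      htcl.2]
    · rw [Finset.card_insert_of_notMem (by simp [huv]), Finset.card_singleton]
      omega
    · simp only [Finset.disjoint_left]
      rintro x hx
      simp only [Finset.mem_image] at hx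
      obtain ⟨i, _, rfl⟩ := hx
      simp
  · simp
  · simp

/-- If every subset of A = Fin a of size a/(log a)² contains a K_{s−2}
of G_A, the A–B edges are independent with probability p, then for any collection E of
pairs of distinct vertices of B, the expected number of pairs of E not completed by the
resulting graph (adding the pair creates no K_s) is at most (1−p²)^{a − a/log a}·|E|,
for a sufficiently large. -/
theorem stmt_12 (s : ℕ) (hs : 3 ≤ s) (p : ℝ) (hp0 : 0 < p) (hp1 : p < 1) :
    ∃ a₀ : ℕ, ∀ a : ℕ, a₀ ≤ a →
      ∀ (B : Type) [Fintype B] [DecidableEq B] (GA : SimpleGraph (Fin a)),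
        (∀ S : Finset (Fin a), (a : ℝ) / (Real.log a) ^ 2 ≤ S.card →
          ∃ t : Finset (Fin a), t ⊆ S ∧ GA.IsNClique (s - 2) t) →
        ∀ E : Finset (B × B), (∀ e ∈ E, e.1 ≠ e.2) →
          (∫⁻ ω : Fin a → B → Bool,
              ((E.filter fun e : B × B =>
                ¬ ∃ t : Finset (Fin a ⊕ B),
                  ((bipRandomGraph a B GA ω) ⊔
                    SimpleGraph.fromEdgeSet {s(Sum.inr e.1, Sum.inr e.2)}).IsNClique s t
                  ∧ Sum.inr e.1 ∈ t ∧ Sum.inr e.2 ∈ t).card : ℝ≥0∞)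
            ∂(Measure.pi fun _ : Fin a => Measure.pi fun _ : B =>
                (PMF.bernoulli (Real.toNNReal p)
                  (Real.toNNReal_le_one.mpr hp1.le)).toMeasure))
          ≤ ENNReal.ofReal
              ((1 - p ^ 2) ^ ((a : ℝ) - (a : ℝ) / Real.log a) * E.card) := by
  obtain ⟨a₀, ha₀⟩ := Filter.eventually_atTop.mp (key_bound p hp0 hp1)
  refine ⟨a₀, fun a ha B _ _ GA hGA E hE => ?_⟩
  have hkey := ha₀ a ha
  set μ := (Measure.pi fun _ : Fin a => Measure.pi fun _ : B =>
    (PMF.bernoulli (Real.toNNReal p) (Real.toNNReal_le_one.mpr hp1.le)).toMeasure) with hμ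
  set N : B × B → (Fin a → B → Bool) → Prop := fun e ω =>
    ¬ ∃ t : Finset (Fin a ⊕ B),
      ((bipRandomGraph a B GA ω) ⊔
        SimpleGraph.fromEdgeSet {s(Sum.inr e.1, Sum.inr e.2)}).IsNClique s t
      ∧ Sum.inr e.1 ∈ t ∧ Sum.inr e.2 ∈ t with hN
  set T : ℝ := (1 - p ^ 2) ^ ((a : ℝ) - (a : ℝ) / Real.log a) with hT
  have hQ0 : (0:ℝ) < 1 - p^2 := by nlinarith
  have hT0 : 0 ≤ T := (Real.rpow_pos_of_pos hQ0 _).le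
  -- Step 1: the integral equals the sum of probabilities
  have step1 : (∫⁻ ω : Fin a → B → Bool,
        ((E.filter fun e : B × B => N e ω).card : ℝ≥0∞) ∂μ)
      = ∑ e ∈ E, μ {ω : Fin a → B → Bool | N e ω} := by
    have hrw : ∀ ω : Fin a → B → Bool,
        ((E.filter fun e : B × B => N e ω).card : ℝ≥0∞)
        = ∑ e ∈ E, Set.indicator {ω' : Fin a → B → Bool | N e ω'} (fun _ => (1:ℝ≥0∞)) ω := by
      intro ω
      rw [Finset.card_filter, Nat.cast_sum]
      apply Finset.sum_congr rfl
      intro e _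
      rw [Set.indicator_apply]
      by_cases h : N e ω <;> simp [h]
    simp_rw [hrw]
    rw [lintegral_finset_sum _ (fun e _ => Measurable.of_discrete)]
    apply Finset.sum_congr rfl
    intro e _
    exact lintegral_indicator_one MeasurableSet.of_discrete
  rw [step1]
  -- Step 2: each probability is at most ofReal T
  have step2 : ∀ e ∈ E, μ {ω : Fin a → B → Bool | N e ω} ≤ ENNReal.ofReal T := by
    intro e heE
    have huv : e.1 ≠ e.2 := hE e heE
    -- inclusion into the small-common-neighborhood event
    have hincl : {ω : Fin a → B → Bool | N e ω}
        ⊆ {ω : Fin a → B → Bool |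
            ((Finset.univ.filter fun i : Fin a =>
              ω i e.1 = true ∧ ω i e.2 = true).card : ℝ) < (a:ℝ) / (Real.log a)^2} := by
      intro ω hω
      simp only [Set.mem_setOf_eq] at hω ⊢
      by_contra hcon
      push_neg at hcon
      exact hω (completes hs GA hGA ω e.1 e.2 huv hcon)
    refine le_trans (measure_mono hincl) ?_
    refine le_trans (pair_prob_le hp0 hp1 e.1 e.2 huv) ?_
    -- sum of binomial terms ≤ ofReal T
    have hterm : ∀ j ∈ Finset.range (a+1),
        a.choose j • (if (j:ℝ) < (a:ℝ) / (Real.log a)^2 then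
          ENNReal.ofReal (p^2) ^ j * ENNReal.ofReal (1-p^2) ^ (a - j) else 0)
        ≤ ENNReal.ofReal T / ((a:ℝ≥0∞)+1) := by
      intro j hj
      rw [Finset.mem_range] at hj
      have hja : j ≤ a := Nat.lt_succ_iff.mp hj
      by_cases hcond : (j:ℝ) < (a:ℝ) / (Real.log a)^2
      · rw [if_pos hcond, nsmul_eq_mul]
        have heq : (a.choose j : ℝ≥0∞) * (ENNReal.ofReal (p^2) ^ j
              * ENNReal.ofReal (1-p^2) ^ (a - j))
            = ENNReal.ofReal ((a.choose j : ℝ) * (p^2)^j * (1-p^2)^(a-j)) := by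
          rw [← ENNReal.ofReal_pow (by positivity), ← ENNReal.ofReal_pow hQ0.le,
            ← ENNReal.ofReal_mul (by positivity), ← ENNReal.ofReal_natCast (a.choose j),
            ← ENNReal.ofReal_mul (by positivity), mul_assoc]
        rw [heq]
        have hreal := hkey j hja hcond
        have hdiv : (a.choose j : ℝ) * (p^2)^j * (1-p^2)^(a-j) ≤ T / ((a:ℝ)+1) := by
          rw [le_div_iff₀ (by positivity)]
          exact hreal
        refine le_trans (ENNReal.ofReal_le_ofReal hdiv) ?_
        rw [ENNReal.ofReal_div_of_pos (by positivity)]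
        apply ENNReal.div_le_div_left
        · rw [← ENNReal.ofReal_one, ← ENNReal.ofReal_natCast a, ← ENNReal.ofReal_add (by positivity) (by norm_num)]
      · rw [if_neg hcond, smul_zero]
        exact bot_le
    calc ∑ j ∈ Finset.range (a+1),
          a.choose j • (if (j:ℝ) < (a:ℝ) / (Real.log a)^2 then
            ENNReal.ofReal (p^2) ^ j * ENNReal.ofReal (1-p^2) ^ (a - j) else 0)
        ≤ ∑ _j ∈ Finset.range (a+1), ENNReal.ofReal T / ((a:ℝ≥0∞)+1) :=
          Finset.sum_le_sum hterm
      _ = ((a:ℝ≥0∞)+1) * (ENNReal.ofReal T / ((a:ℝ≥0∞)+1)) := by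
          rw [Finset.sum_const, Finset.card_range, nsmul_eq_mul]
          congr 1
          push_cast
          ring
      _ = ENNReal.ofReal T := by
          apply ENNReal.mul_div_cancel
          · simp
          · exact ENNReal.add_ne_top.mpr ⟨ENNReal.natCast_ne_top a, ENNReal.one_ne_top⟩
  calc ∑ e ∈ E, μ {ω : Fin a → B → Bool | N e ω}
      ≤ ∑ _e ∈ E, ENNReal.ofReal T := Finset.sum_le_sum step2
    _ = E.card • ENNReal.ofReal T := by rw [Finset.sum_const]
    _ = ENNReal.ofReal (T * E.card) := by
        rw [nsmul_eq_mul, ENNReal.ofReal_mul hT0, ENNReal.ofReal_natCast, mul_comm]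
end
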